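/- Let (X, F) be a measurable space, μ : F → [0,∞] a monotone measure, and p, q ≥ 1. Let f, h : X → [0,∞) be comonotone measurable functions, and let A ∈ F with 0 < μ(A) < ∞ and (C)∫_A f dμ < ∞. Then ((C)∫_A f dμ)² · ((C)∫_A h dμ) ≤ μ(A)^{3 − (1/p + 1/q)} · ((C)∫_A f^p dμ)^{1/p} · ((C)∫_A f^q h^q dμ)^{1/q}. -/

import Mathlib

open scoped ENNReal NNReal

/-- The Choquet integral of `f` on `A` with respect to the monotone set
function `μ`: `(C)∫_A f dμ = ∫_0^∞ μ(A ∩ {f ≥ t}) dt`. -/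
noncomputable def choquet {X : Type*} (μ : Set X → ℝ≥0∞) (f : X → ℝ≥0∞)
    (A : Set X) : ℝ≥0∞ :=
  ∫⁻ t in Set.Ioi (0:ℝ), μ (A ∩ {x | ENNReal.ofReal t ≤ f x})

/-- `f, g : X → [0,∞)` are comonotone: `(f(x) − f(y))(g(x) − g(y)) ≥ 0`. -/
def Comonotone {X : Type*} (f g : X → ℝ≥0) : Prop :=
  ∀ x y, 0 ≤ ((f x : ℝ) - (f y : ℝ)) * ((g x : ℝ) - (g y : ℝ))

section AuxSec
open MeasureTheory Set

namespace CarlsonAux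

lemma lower_ofReal_le {S : Set ℝ} (hS : ∀ s ∈ S, Ioc 0 s ⊆ S) {s : ℝ} (hs : s ∈ S) :
    ENNReal.ofReal s ≤ volume S := by
  calc ENNReal.ofReal s = volume (Ioc 0 s) := by rw [Real.volume_Ioc, sub_zero]
  _ ≤ volume S := measure_mono (hS s hs)

lemma lower_subset_Ioo {S : Set ℝ} (hS0 : S ⊆ Ioi 0) (hS : ∀ s ∈ S, Ioc 0 s ⊆ S) :
    Ioo 0 (volume S).toReal ⊆ S := by
  intro u hu
  by_contra hu'
  have hsub : S ⊆ Ioo 0 u := fun s hs => ⟨hS0 hs, by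
    by_contra hlt; push_neg at hlt
    exact hu' (hS s hs ⟨hu.1, hlt⟩)⟩
  have h2 : volume S ≤ volume (Ioo 0 u) := measure_mono hsub
  rw [Real.volume_Ioo, sub_zero] at h2
  have h3 : (volume S).toReal ≤ u := ENNReal.toReal_le_of_le_ofReal hu.1.le h2
  linarith [hu.2]

lemma lower_eq_Ioi {S : Set ℝ} (hS0 : S ⊆ Ioi 0) (hS : ∀ s ∈ S, Ioc 0 s ⊆ S)
    (h : volume S = ∞) : S = Ioi 0 := by
  refine Subset.antisymm hS0 (fun u hu => ?_)
  by_contra hu'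
  have hsub : S ⊆ Ioo 0 u := fun s hs => ⟨hS0 hs, by
    by_contra hlt; push_neg at hlt
    exact hu' (hS s hs ⟨hu, hlt⟩)⟩
  have h2 : volume S ≤ volume (Ioo 0 u) := measure_mono hsub
  rw [h, Real.volume_Ioo] at h2
  exact ENNReal.ofReal_ne_top (top_le_iff.mp h2)

lemma vol_rpow_preimage {S : Set ℝ} (hS0 : S ⊆ Ioi 0) (hS : ∀ s ∈ S, Ioc 0 s ⊆ S)
    {r : ℝ} (hr : 0 < r) :
    volume {t : ℝ | 0 < t ∧ t ^ (1/r) ∈ S} = volume S ^ r := by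
  rcases eq_or_ne (volume S) ∞ with hvol | hvol
  · have hSeq := lower_eq_Ioi hS0 hS hvol
    have : {t : ℝ | 0 < t ∧ t ^ (1/r) ∈ S} = Ioi 0 := by
      ext t
      simp only [hSeq, mem_setOf_eq, mem_Ioi]
      exact ⟨fun ht => ht.1, fun ht => ⟨ht, Real.rpow_pos_of_pos ht _⟩⟩
    rw [this, hvol, Real.volume_Ioi, ENNReal.top_rpow_of_pos hr]
  · set d := (volume S).toReal with hd
    have hd0 : 0 ≤ d := ENNReal.toReal_nonneg
    have hsub1 : {t : ℝ | 0 < t ∧ t ^ (1/r) ∈ S} ⊆ Ioc 0 (d ^ r) := by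
      rintro t ⟨ht, htS⟩
      refine ⟨ht, ?_⟩
      have h1 : ENNReal.ofReal (t ^ (1/r)) ≤ volume S := lower_ofReal_le hS htS
      have h2 : t ^ (1/r) ≤ d := by
        have h2' := ENNReal.toReal_mono hvol h1
        rwa [ENNReal.toReal_ofReal (Real.rpow_nonneg ht.le _)] at h2'
      calc t = (t ^ (1/r)) ^ r := by
            rw [← Real.rpow_mul ht.le, one_div_mul_cancel hr.ne', Real.rpow_one]
        _ ≤ d ^ r := Real.rpow_le_rpow (Real.rpow_nonneg ht.le _) h2 hr.le
    have hsub2 : Ioo 0 (d ^ r) ⊆ {t : ℝ | 0 < t ∧ t ^ (1/r) ∈ S} := by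
      rintro t ⟨ht, htd⟩
      refine ⟨ht, lower_subset_Ioo hS0 hS ⟨Real.rpow_pos_of_pos ht _, ?_⟩⟩
      have h3 : t ^ (1/r) < (d ^ r) ^ (1/r) :=
        Real.rpow_lt_rpow ht.le htd (by positivity)
      rwa [← Real.rpow_mul hd0, mul_one_div_cancel hr.ne', Real.rpow_one] at h3
    have hub : volume {t : ℝ | 0 < t ∧ t ^ (1/r) ∈ S} ≤ ENNReal.ofReal (d ^ r) := by
      calc volume {t : ℝ | 0 < t ∧ t ^ (1/r) ∈ S} ≤ volume (Ioc 0 (d ^ r)) :=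
            measure_mono hsub1
      _ = ENNReal.ofReal (d ^ r) := by rw [Real.volume_Ioc, sub_zero]
    have hlb : ENNReal.ofReal (d ^ r) ≤ volume {t : ℝ | 0 < t ∧ t ^ (1/r) ∈ S} := by
      calc ENNReal.ofReal (d ^ r) = volume (Ioo 0 (d ^ r)) := by
            rw [Real.volume_Ioo, sub_zero]
      _ ≤ volume {t : ℝ | 0 < t ∧ t ^ (1/r) ∈ S} := measure_mono hsub2
    rw [← ENNReal.ofReal_toReal hvol, ← hd, ENNReal.ofReal_rpow_of_nonneg hd0 hr.le]
    exact le_antisymm hub hlb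

/-- Layer cake for a bounded antitone `ℝ≥0∞`-valued function on `(0,∞)`. -/
lemma layercake {ν : ℝ → ℝ≥0∞} (hν : Antitone ν) {m : ℝ≥0∞} (hm : m ≠ ∞)
    (hle : ∀ t, ν t ≤ m) :
    ∫⁻ t in Ioi (0:ℝ), ν t
      = ∫⁻ l in Ioi (0:ℝ), volume ({t | ENNReal.ofReal l < ν t} ∩ Ioi 0) := by
  have hnetop : ∀ t, ν t ≠ ∞ := fun t => ((hle t).trans_lt hm.lt_top).ne
  set g : ℝ → ℝ := fun t => (ν t).toReal with hg
  have hganti : Antitone g := fun s t hst =>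
    ENNReal.toReal_mono (hnetop s) (hν hst)
  have hgm : Measurable g := hganti.measurable
  have key := lintegral_eq_lintegral_meas_lt (volume.restrict (Ioi (0:ℝ)))
    (ae_of_all _ fun t => ENNReal.toReal_nonneg) hgm.aemeasurable
  have hL : ∫⁻ t in Ioi (0:ℝ), ENNReal.ofReal (g t) = ∫⁻ t in Ioi (0:ℝ), ν t :=
    lintegral_congr fun t => ENNReal.ofReal_toReal (hnetop t)
  rw [hL] at key
  rw [key]
  refine setLIntegral_congr_fun_ae measurableSet_Ioi (ae_of_all _ fun l hl => ?_)
  have hms : MeasurableSet {t : ℝ | l < g t} :=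
    measurableSet_lt measurable_const hgm
  rw [Measure.restrict_apply hms]
  congr 1
  ext t
  simp only [mem_inter_iff, mem_setOf_eq]
  rw [ENNReal.ofReal_lt_iff_lt_toReal (le_of_lt hl) (hnetop t)]

/-- Integral over `(0,∞)` of a function vanishing on `[c,∞)` equals integral over `(0,c)`. -/
lemma lintegral_Ioi_eq_Ioo {D : ℝ → ℝ≥0∞} {c : ℝ} (hc : 0 < c)
    (h0 : ∀ l, c ≤ l → D l = 0) :
    ∫⁻ l in Ioi (0:ℝ), D l = ∫⁻ l in Ioo (0:ℝ) c, D l := by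
  have hsplit : Ioi (0:ℝ) = Ioo 0 c ∪ Ici c := by
    ext x; simp only [mem_Ioi, mem_union, mem_Ioo, mem_Ici]
    constructor
    · intro hx; rcases lt_or_ge x c with h | h
      · exact Or.inl ⟨hx, h⟩
      · exact Or.inr h
    · rintro (⟨h1, _⟩ | h1); exacts [h1, hc.trans_le h1]
  have hdisj : Disjoint (Ioo (0:ℝ) c) (Ici c) := by
    rw [Set.disjoint_left]; rintro x ⟨_, hx2⟩ hx3
    exact absurd hx3 (not_le.mpr hx2)
  rw [hsplit, lintegral_union measurableSet_Ici hdisj]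
  have : ∫⁻ l in Ici c, D l = ∫⁻ _ in Ici c, (0:ℝ≥0∞) :=
    setLIntegral_congr_fun_ae measurableSet_Ici (ae_of_all _ fun l hl => h0 l hl)
  rw [this, lintegral_zero, add_zero]

/-- Chebyshev's integral inequality (similarly ordered / `ℝ≥0∞` version). -/
lemma chebyshev (μ₀ : Measure ℝ) {a b : ℝ → ℝ≥0∞} (ha : Measurable a)
    (hb : Measurable b) (haa : Antitone a) (hba : Antitone b) :
    (∫⁻ x, a x ∂μ₀) * (∫⁻ x, b x ∂μ₀) ≤ μ₀ univ * ∫⁻ x, a x * b x ∂μ₀ := by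
  have hpt : ∀ x y, a x * b y + a y * b x ≤ a x * b x + a y * b y := by
    intro x y
    rcases le_total x y with hxy | hxy
    · have h2 : b y ≤ b x := hba hxy
      obtain ⟨e, he⟩ := exists_add_of_le (haa hxy : a y ≤ a x)
      rw [he, add_mul, add_mul]
      calc a y * b y + e * b y + a y * b x
          ≤ a y * b y + e * b x + a y * b x := by gcongr
        _ = a y * b x + e * b x + a y * b y := by ring
    · have h2 : b x ≤ b y := hba hxy
      obtain ⟨e, he⟩ := exists_add_of_le (haa hxy : a x ≤ a y)
      rw [he, add_mul, add_mul]
      calc a x * b y + (a x * b x + e * b x)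
          ≤ a x * b y + (a x * b x + e * b y) := by gcongr
        _ = a x * b x + (a x * b y + e * b y) := by ring
  set I := ∫⁻ x, a x ∂μ₀ with hI
  set J := ∫⁻ x, b x ∂μ₀ with hJ
  set C := ∫⁻ x, a x * b x ∂μ₀ with hC
  set M := μ₀ univ with hM
  have hL : ∀ x, ∫⁻ y, (a x * b y + a y * b x) ∂μ₀ = a x * J + I * b x := by
    intro x
    rw [lintegral_add_left (hb.const_mul _), lintegral_const_mul _ hb,
      lintegral_mul_const _ ha]
  have hR : ∀ x, ∫⁻ y, (a x * b x + a y * b y) ∂μ₀ = a x * b x * M + C := by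
    intro x
    rw [lintegral_add_left measurable_const, lintegral_const]
  have h1 : ∫⁻ x, (a x * J + I * b x) ∂μ₀ = I * J + I * J := by
    rw [lintegral_add_left (ha.mul_const _), lintegral_mul_const _ ha,
      lintegral_const_mul _ hb]
  have h2 : ∫⁻ x, (a x * b x * M + C) ∂μ₀ = C * M + C * M := by
    rw [lintegral_add_left (f := fun x => a x * b x * M) ((ha.mul hb).mul_const _),
      lintegral_mul_const (f := fun x => a x * b x) _ (ha.mul hb),
      lintegral_const, hC, hM]
  have hmain : I * J + I * J ≤ C * M + C * M := by
    rw [← h1, ← h2]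
    refine lintegral_mono fun x => ?_
    rw [← hL x, ← hR x]
    exact lintegral_mono (hpt x)
  rw [← two_mul, ← two_mul] at hmain
  have := (ENNReal.mul_le_mul_iff_right two_ne_zero ENNReal.ofNat_ne_top).mp hmain
  rwa [mul_comm C M] at this

/-- Hölder step: `∫ν ≤ m^(1-1/r) * (∫νr)^(1/r)` where `νr t = ν (t^(1/r))`. -/
lemma holder_step {ν νr : ℝ → ℝ≥0∞} (hν : Antitone ν) (hνr : Antitone νr)
    {m : ℝ≥0∞} (hm0 : m ≠ 0) (hm : m ≠ ∞) (hle : ∀ t, ν t ≤ m) (hler : ∀ t, νr t ≤ m)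
    {r : ℝ} (hr : 1 ≤ r) (heq : ∀ t, 0 < t → νr t = ν (t ^ (1/r))) :
    ∫⁻ t in Ioi (0:ℝ), ν t ≤ m ^ (1 - 1/r) * (∫⁻ t in Ioi (0:ℝ), νr t) ^ (1/r) := by
  rcases eq_or_lt_of_le hr with hr1 | hr1
  · -- r = 1
    have heq' : ∫⁻ t in Ioi (0:ℝ), ν t = ∫⁻ t in Ioi (0:ℝ), νr t := by
      refine setLIntegral_congr_fun_ae measurableSet_Ioi (ae_of_all _ fun t ht => ?_)
      rw [heq t ht, ← hr1, div_one, Real.rpow_one]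
    rw [heq', ← hr1]
    simp
  · -- 1 < r
    have hr0 : 0 < r := lt_trans zero_lt_one hr1
    set mb := m.toReal with hmb
    have hmb0 : 0 < mb := ENNReal.toReal_pos hm0 hm
    set D : ℝ → ℝ≥0∞ := fun l => volume ({t | ENNReal.ofReal l < ν t} ∩ Ioi 0) with hD
    set Dr : ℝ → ℝ≥0∞ := fun l => volume ({t | ENNReal.ofReal l < νr t} ∩ Ioi 0) with hDr
    have hDanti : Antitone D := fun l1 l2 h12 => measure_mono
      (inter_subset_inter_left _ (fun t ht =>
        lt_of_le_of_lt (ENNReal.ofReal_le_ofReal h12) ht))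
    have hDmeas : Measurable D := hDanti.measurable
    have hlayer1 : ∫⁻ t in Ioi (0:ℝ), ν t = ∫⁻ l in Ioi (0:ℝ), D l :=
      layercake hν hm hle
    have hlayer2 : ∫⁻ t in Ioi (0:ℝ), νr t = ∫⁻ l in Ioi (0:ℝ), Dr l :=
      layercake hνr hm hler
    have hDr_eq : ∀ l, Dr l = D l ^ r := by
      intro l
      have hset : {t | ENNReal.ofReal l < νr t} ∩ Ioi 0
          = {t : ℝ | 0 < t ∧ t ^ (1/r) ∈ ({s | ENNReal.ofReal l < ν s} ∩ Ioi 0)} := by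
        ext t
        simp only [mem_inter_iff, mem_setOf_eq, mem_Ioi]
        constructor
        · rintro ⟨ht1, ht2⟩
          exact ⟨ht2, by rwa [← heq t ht2], Real.rpow_pos_of_pos ht2 _⟩
        · rintro ⟨ht1, ht2, _⟩
          exact ⟨by rwa [heq t ht1], ht1⟩
      rw [hDr, hD]
      simp only
      rw [hset]
      exact vol_rpow_preimage inter_subset_right
        (fun s hs s' hs' => ⟨lt_of_le_of_lt (ENNReal.ofReal_le_ofReal (le_refl l))
          (lt_of_lt_of_le hs.1 (hν hs'.2)), hs'.1⟩) hr0
    have hD0 : ∀ l, mb ≤ l → D l = 0 := by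
      intro l hl
      have : {t | ENNReal.ofReal l < ν t} ∩ Ioi 0 = ∅ := by
        refine eq_empty_iff_forall_notMem.mpr fun t ⟨ht1, _⟩ => ?_
        have : ν t ≤ ENNReal.ofReal l := by
          calc ν t ≤ m := hle t
          _ = ENNReal.ofReal mb := (ENNReal.ofReal_toReal hm).symm
          _ ≤ ENNReal.ofReal l := ENNReal.ofReal_le_ofReal hl
        exact absurd ht1 (not_lt.mpr this)
      rw [hD]; simp only; rw [this, measure_empty]
    have hconj : r.HolderConjugate (Real.conjExponent r) :=
      Real.HolderConjugate.conjExponent hr1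
    have h1r' : 1/(Real.conjExponent r) = 1 - 1/r := by
      have h := hconj.inv_add_inv_eq_one
      rw [one_div, one_div]
      linarith
    have hH := ENNReal.lintegral_mul_le_Lp_mul_Lq (volume.restrict (Ioo (0:ℝ) mb)) hconj
      hDmeas.aemeasurable (aemeasurable_const (b := (1:ℝ≥0∞)))
    simp only [Pi.mul_apply, mul_one, ENNReal.one_rpow, lintegral_const,
      Measure.restrict_apply_univ, Real.volume_Ioo, sub_zero, one_mul] at hH
    have hvol : ENNReal.ofReal mb = m := ENNReal.ofReal_toReal hm
    rw [hvol, h1r'] at hH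
    calc ∫⁻ t in Ioi (0:ℝ), ν t = ∫⁻ l in Ioi (0:ℝ), D l := hlayer1
      _ = ∫⁻ l in Ioo (0:ℝ) mb, D l := lintegral_Ioi_eq_Ioo hmb0 hD0
      _ ≤ (∫⁻ l in Ioo (0:ℝ) mb, D l ^ r) ^ (1/r) * m ^ (1 - 1/r) := hH
      _ ≤ (∫⁻ l in Ioi (0:ℝ), D l ^ r) ^ (1/r) * m ^ (1 - 1/r) := by
          gcongr
          exact fun x hx => hx.1
      _ = m ^ (1 - 1/r) * (∫⁻ t in Ioi (0:ℝ), νr t) ^ (1/r) := by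
          rw [hlayer2, mul_comm]
          congr 2
          exact lintegral_congr fun l => (hDr_eq l).symm

/-- Volume of the "product" of two lower sets. -/
lemma vol_mul_le {Sf Sh W : Set ℝ} (hSf0 : Sf ⊆ Ioi 0) (hSf : ∀ s ∈ Sf, Ioc 0 s ⊆ Sf)
    (hSh0 : Sh ⊆ Ioi 0) (hSh : ∀ s ∈ Sh, Ioc 0 s ⊆ Sh)
    (hW : ∀ s ∈ Sf, ∀ t ∈ Sh, s * t ∈ W) :
    volume Sf * volume Sh ≤ volume W := by
  rcases eq_or_ne (volume Sf) 0 with h0 | h0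
  · rw [h0, zero_mul]; exact zero_le
  rcases eq_or_ne (volume Sh) 0 with h0' | h0'
  · rw [h0', mul_zero]; exact zero_le
  have hne_f : Sf.Nonempty :=
    nonempty_iff_ne_empty.mpr (fun he => h0 (by rw [he, measure_empty]))
  have hne_h : Sh.Nonempty :=
    nonempty_iff_ne_empty.mpr (fun he => h0' (by rw [he, measure_empty]))
  rcases eq_or_ne (volume Sf) ∞ with hfi | hfi
  · obtain ⟨t0, ht0⟩ := hne_h
    have ht0pos : 0 < t0 := hSh0 ht0
    have hWIoi : Ioi (0:ℝ) ⊆ W := by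
      intro u hu
      have hu' : (0:ℝ) < u := hu
      have hmem := hW (u/t0)
        (by rw [lower_eq_Ioi hSf0 hSf hfi]; exact mem_Ioi.mpr (by positivity)) t0 ht0
      rwa [div_mul_cancel₀ _ ht0pos.ne'] at hmem
    calc volume Sf * volume Sh ≤ ∞ := le_top
    _ = volume (Ioi (0:ℝ)) := Real.volume_Ioi.symm
    _ ≤ volume W := measure_mono hWIoi
  rcases eq_or_ne (volume Sh) ∞ with hhi | hhi
  · obtain ⟨s0, hs0⟩ := hne_f
    have hs0pos : 0 < s0 := hSf0 hs0
    have hWIoi : Ioi (0:ℝ) ⊆ W := by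
      intro u hu
      have hu' : (0:ℝ) < u := hu
      have hmem := hW s0 hs0 (u/s0)
        (by rw [lower_eq_Ioi hSh0 hSh hhi]; exact mem_Ioi.mpr (by positivity))
      rwa [mul_div_cancel₀ _ hs0pos.ne'] at hmem
    calc volume Sf * volume Sh ≤ ∞ := le_top
    _ = volume (Ioi (0:ℝ)) := Real.volume_Ioi.symm
    _ ≤ volume W := measure_mono hWIoi
  set a := (volume Sf).toReal with ha
  set b := (volume Sh).toReal with hb
  have ha0 : 0 < a := ENNReal.toReal_pos h0 hfi
  have hb0 : 0 < b := ENNReal.toReal_pos h0' hhi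
  have hIoo : Ioo 0 (a*b) ⊆ W := by
    rintro u ⟨hu0, hu1⟩
    have hdiv : u / b < a := (div_lt_iff₀ hb0).mpr hu1
    obtain ⟨s, hs1, hs2⟩ := exists_between hdiv
    have hspos : 0 < s := lt_trans (by positivity) hs1
    have hsSf : s ∈ Sf := lower_subset_Ioo hSf0 hSf ⟨hspos, hs2⟩
    have htpos : 0 < u / s := by positivity
    have htb : u / s < b := by
      rw [div_lt_iff₀ hspos]
      calc u = (u/b) * b := by field_simp
      _ < s * b := by gcongr
      _ = b * s := mul_comm _ _
    have htSh : u / s ∈ Sh := lower_subset_Ioo hSh0 hSh ⟨htpos, htb⟩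
    have hmem := hW s hsSf (u/s) htSh
    rwa [mul_div_cancel₀ _ hspos.ne'] at hmem
  calc volume Sf * volume Sh = ENNReal.ofReal a * ENNReal.ofReal b := by
        rw [ENNReal.ofReal_toReal hfi, ENNReal.ofReal_toReal hhi]
  _ = ENNReal.ofReal (a * b) := (ENNReal.ofReal_mul ha0.le).symm
  _ = volume (Ioo 0 (a*b)) := by rw [Real.volume_Ioo, sub_zero]
  _ ≤ volume W := measure_mono hIoo

/-- Basic properties of the Choquet integrand. -/
lemma nu_antitone_le {X : Type*} [MeasurableSpace X] (μ : Set X → ℝ≥0∞)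
    (hμmono : ∀ A B : Set X, MeasurableSet A → MeasurableSet B → A ⊆ B → μ A ≤ μ B)
    {A : Set X} (hA : MeasurableSet A) {g : X → ℝ≥0∞} (hg : Measurable g) :
    Antitone (fun t : ℝ => μ (A ∩ {x | ENNReal.ofReal t ≤ g x})) ∧
      ∀ t : ℝ, μ (A ∩ {x | ENNReal.ofReal t ≤ g x}) ≤ μ A := by
  have hms : ∀ t : ℝ, MeasurableSet (A ∩ {x | ENNReal.ofReal t ≤ g x}) := fun t =>
    hA.inter (hg measurableSet_Ici)
  constructor
  · intro t1 t2 h12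
    exact hμmono _ _ (hms t2) (hms t1) (inter_subset_inter_right _ fun x hx =>
      le_trans (ENNReal.ofReal_le_ofReal h12) hx)
  · intro t
    exact hμmono _ _ (hms t) hA inter_subset_left

/-- Level sets of an `rpow`. -/
lemma pow_level (v : ℝ≥0∞) {r t : ℝ} (hr : 0 < r) (ht : 0 < t) :
    (ENNReal.ofReal t ≤ v ^ r) ↔ ENNReal.ofReal (t ^ (1/r)) ≤ v := by
  rw [← ENNReal.ofReal_rpow_of_pos ht]
  constructor
  · intro hle
    have h2 := ENNReal.rpow_le_rpow hle (le_of_lt (by positivity : (0:ℝ) < 1/r))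
    rwa [← ENNReal.rpow_mul, mul_one_div_cancel hr.ne', ENNReal.rpow_one] at h2
  · intro hle
    have h2 := ENNReal.rpow_le_rpow hle hr.le
    rwa [← ENNReal.rpow_mul, one_div_mul_cancel hr.ne', ENNReal.rpow_one] at h2

lemma D_antitone (ν : ℝ → ℝ≥0∞) :
    Antitone (fun l => volume ({t | ENNReal.ofReal l < ν t} ∩ Ioi 0)) :=
  fun l1 l2 h12 => measure_mono (inter_subset_inter_left _ (fun t ht =>
    lt_of_le_of_lt (ENNReal.ofReal_le_ofReal h12) ht))

lemma D_zero {ν : ℝ → ℝ≥0∞} {m : ℝ≥0∞} (hm : m ≠ ∞) (hle : ∀ t, ν t ≤ m) :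
    ∀ l, m.toReal ≤ l → volume ({t | ENNReal.ofReal l < ν t} ∩ Ioi 0) = 0 := by
  intro l hl
  have he : {t | ENNReal.ofReal l < ν t} ∩ Ioi 0 = ∅ := by
    refine eq_empty_iff_forall_notMem.mpr ?_
    rintro t ⟨ht1, _⟩
    refine absurd (show ENNReal.ofReal l < ν t from ht1) (not_lt.mpr ?_)
    calc ν t ≤ m := hle t
    _ = ENNReal.ofReal m.toReal := (ENNReal.ofReal_toReal hm).symm
    _ ≤ ENNReal.ofReal l := ENNReal.ofReal_le_ofReal hl
  rw [he, measure_empty]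

lemma layer_Ioo {ν : ℝ → ℝ≥0∞} (hν : Antitone ν) {m : ℝ≥0∞} (hm0 : m ≠ 0) (hm : m ≠ ∞)
    (hle : ∀ t, ν t ≤ m) :
    ∫⁻ t in Ioi (0:ℝ), ν t
      = ∫⁻ l in Ioo (0:ℝ) m.toReal, volume ({t | ENNReal.ofReal l < ν t} ∩ Ioi 0) := by
  rw [layercake hν hm hle]
  exact lintegral_Ioi_eq_Ioo (ENNReal.toReal_pos hm0 hm) (D_zero hm hle)

/-- The abstract core of the Carlson-type inequality. -/
lemma main_core (νf νh νfh νp νQ : ℝ → ℝ≥0∞) {m : ℝ≥0∞}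
    (hm0 : m ≠ 0) (hmtop : m ≠ ∞)
    (haf : Antitone νf) (hah : Antitone νh) (hafh : Antitone νfh)
    (hap : Antitone νp) (haQ : Antitone νQ)
    (hlf : ∀ t, νf t ≤ m) (hlh : ∀ t, νh t ≤ m) (hlfh : ∀ t, νfh t ≤ m)
    (hlp : ∀ t, νp t ≤ m) (hlQ : ∀ t, νQ t ≤ m)
    {p q : ℝ} (hp : 1 ≤ p) (hq : 1 ≤ q)
    (heqp : ∀ t, 0 < t → νp t = νf (t ^ (1/p)))
    (heqQ : ∀ t, 0 < t → νQ t = νfh (t ^ (1/q)))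
    (hmin : ∀ s t : ℝ, 0 < s → 0 < t → min (νf s) (νh t) ≤ νfh (s * t)) :
    (∫⁻ t in Ioi (0:ℝ), νf t) ^ 2 * (∫⁻ t in Ioi (0:ℝ), νh t)
      ≤ m ^ (3 - (1/p + 1/q)) * (∫⁻ t in Ioi (0:ℝ), νp t) ^ (1/p)
        * (∫⁻ t in Ioi (0:ℝ), νQ t) ^ (1/q) := by
  have hcheb : (∫⁻ t in Ioi (0:ℝ), νf t) * (∫⁻ t in Ioi (0:ℝ), νh t)
      ≤ m * (∫⁻ t in Ioi (0:ℝ), νfh t) := by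
    have hch := chebyshev (volume.restrict (Ioo (0:ℝ) m.toReal))
      (D_antitone νf).measurable (D_antitone νh).measurable (D_antitone νf) (D_antitone νh)
    have hμuniv : (volume.restrict (Ioo (0:ℝ) m.toReal)) univ = m := by
      rw [Measure.restrict_apply_univ, Real.volume_Ioo, sub_zero, ENNReal.ofReal_toReal hmtop]
    rw [hμuniv] at hch
    have hpt : ∀ l : ℝ, volume ({t | ENNReal.ofReal l < νf t} ∩ Ioi 0)
        * volume ({t | ENNReal.ofReal l < νh t} ∩ Ioi 0)
        ≤ volume ({t | ENNReal.ofReal l < νfh t} ∩ Ioi 0) := by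
      intro l
      refine vol_mul_le inter_subset_right
        (fun s hs s' hs' => ⟨lt_of_lt_of_le hs.1 (haf hs'.2), hs'.1⟩)
        inter_subset_right
        (fun s hs s' hs' => ⟨lt_of_lt_of_le hs.1 (hah hs'.2), hs'.1⟩)
        ?_
      rintro s ⟨hsf, hs0⟩ t ⟨hth, ht0⟩
      exact ⟨lt_of_lt_of_le (lt_min hsf hth) (hmin s t hs0 ht0), mem_Ioi.mpr (mul_pos hs0 ht0)⟩
    calc (∫⁻ t in Ioi (0:ℝ), νf t) * (∫⁻ t in Ioi (0:ℝ), νh t)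
        = (∫⁻ l in Ioo (0:ℝ) m.toReal, volume ({t | ENNReal.ofReal l < νf t} ∩ Ioi 0))
          * (∫⁻ l in Ioo (0:ℝ) m.toReal, volume ({t | ENNReal.ofReal l < νh t} ∩ Ioi 0)) := by
          rw [layer_Ioo haf hm0 hmtop hlf, layer_Ioo hah hm0 hmtop hlh]
      _ ≤ m * ∫⁻ l in Ioo (0:ℝ) m.toReal,
            (volume ({t | ENNReal.ofReal l < νf t} ∩ Ioi 0)
              * volume ({t | ENNReal.ofReal l < νh t} ∩ Ioi 0)) := hch
      _ ≤ m * ∫⁻ l in Ioo (0:ℝ) m.toReal,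
            volume ({t | ENNReal.ofReal l < νfh t} ∩ Ioi 0) :=
          mul_le_mul_right (lintegral_mono hpt) m
      _ ≤ m * ∫⁻ l in Ioi (0:ℝ),
            volume ({t | ENNReal.ofReal l < νfh t} ∩ Ioi 0) :=
          mul_le_mul_right (lintegral_mono_set (fun x hx => hx.1)) m
      _ = m * ∫⁻ t in Ioi (0:ℝ), νfh t := by rw [← layercake hafh hmtop hlfh]
  have h1 : ∫⁻ t in Ioi (0:ℝ), νf t
      ≤ m ^ (1 - 1/p) * (∫⁻ t in Ioi (0:ℝ), νp t) ^ (1/p) :=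
    holder_step haf hap hm0 hmtop hlf hlp hp heqp
  have h3 : ∫⁻ t in Ioi (0:ℝ), νfh t
      ≤ m ^ (1 - 1/q) * (∫⁻ t in Ioi (0:ℝ), νQ t) ^ (1/q) :=
    holder_step hafh haQ hm0 hmtop hlfh hlQ hq heqQ
  calc (∫⁻ t in Ioi (0:ℝ), νf t) ^ 2 * (∫⁻ t in Ioi (0:ℝ), νh t)
      = (∫⁻ t in Ioi (0:ℝ), νf t)
        * ((∫⁻ t in Ioi (0:ℝ), νf t) * (∫⁻ t in Ioi (0:ℝ), νh t)) := by ring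
    _ ≤ (m ^ (1 - 1/p) * (∫⁻ t in Ioi (0:ℝ), νp t) ^ (1/p))
        * (m * (∫⁻ t in Ioi (0:ℝ), νfh t)) := mul_le_mul' h1 hcheb
    _ ≤ (m ^ (1 - 1/p) * (∫⁻ t in Ioi (0:ℝ), νp t) ^ (1/p))
        * (m * (m ^ (1 - 1/q) * (∫⁻ t in Ioi (0:ℝ), νQ t) ^ (1/q))) := by gcongr
    _ = (m ^ (1 - 1/p) * m ^ (1:ℝ) * m ^ (1 - 1/q))
        * (∫⁻ t in Ioi (0:ℝ), νp t) ^ (1/p) * (∫⁻ t in Ioi (0:ℝ), νQ t) ^ (1/q) := by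
        rw [ENNReal.rpow_one]; ring
    _ = m ^ (3 - (1/p + 1/q))
        * (∫⁻ t in Ioi (0:ℝ), νp t) ^ (1/p) * (∫⁻ t in Ioi (0:ℝ), νQ t) ^ (1/q) := by
        rw [← ENNReal.rpow_add _ _ hm0 hmtop, ← ENNReal.rpow_add _ _ hm0 hmtop]
        have hexp : (1 - 1/p + 1) + (1 - 1/q) = 3 - (1/p + 1/q) := by ring
        rw [hexp]

end CarlsonAux

end AuxSec


section Main
open MeasureTheory Set CarlsonAux

/-- Ouyang's Carlson type inequality for the Choquet integral of comonotone
functions `f, h`: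
`((C)∫_A f dμ)² ((C)∫_A h dμ) ≤ μ(A)^{3−(1/p+1/q)} ((C)∫_A f^p dμ)^{1/p}
((C)∫_A f^q h^q dμ)^{1/q}`. -/
theorem carlson_choquet_ouyang {X : Type*} [MeasurableSpace X]
    -- μ : F → [0,∞] is a monotone measure
    (μ : Set X → ℝ≥0∞)
    (hμ0 : μ ∅ = 0) (hμX : 0 < μ Set.univ)
    (hμmono : ∀ A B : Set X, MeasurableSet A → MeasurableSet B → A ⊆ B → μ A ≤ μ B)
    -- p, q ≥ 1
    (p q : ℝ) (hp : 1 ≤ p) (hq : 1 ≤ q)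
    -- f, h : X → [0,∞) comonotone measurable
    (f h : X → ℝ≥0) (hf : Measurable f) (hh : Measurable h)
    (hfh : Comonotone f h)
    -- A ∈ F with 0 < μ(A) < ∞, and f integrable on A
    (A : Set X) (hA : MeasurableSet A) (hA0 : 0 < μ A) (hAfin : μ A < ∞)
    (hfint : choquet μ (fun x => (f x : ℝ≥0∞)) A < ∞) :
    (choquet μ (fun x => (f x : ℝ≥0∞)) A) ^ 2 *
        choquet μ (fun x => (h x : ℝ≥0∞)) A ≤
      (μ A) ^ (3 - (1/p + 1/q)) *
        (choquet μ (fun x => (f x : ℝ≥0∞) ^ p) A) ^ (1/p) *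
        (choquet μ (fun x => (f x : ℝ≥0∞) ^ q * (h x : ℝ≥0∞) ^ q) A) ^ (1/q) := by
  have hp0 : (0:ℝ) < p := lt_of_lt_of_le one_pos hp
  have hq0 : (0:ℝ) < q := lt_of_lt_of_le one_pos hq
  have hm0 : μ A ≠ 0 := hA0.ne'
  have hmtop : μ A ≠ ∞ := hAfin.ne
  have hfm : Measurable fun x => (f x : ℝ≥0∞) := hf.coe_nnreal_ennreal
  have hhm : Measurable fun x => (h x : ℝ≥0∞) := hh.coe_nnreal_ennreal
  have hfhm : Measurable fun x => (f x : ℝ≥0∞) * (h x : ℝ≥0∞) := hfm.mul hhm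
  have hfpm : Measurable fun x => (f x : ℝ≥0∞) ^ p := hfm.pow_const p
  have hQm : Measurable fun x => (f x : ℝ≥0∞) ^ q * (h x : ℝ≥0∞) ^ q :=
    (hfm.pow_const q).mul (hhm.pow_const q)
  obtain ⟨haf, hlf⟩ := nu_antitone_le μ hμmono hA hfm
  obtain ⟨hah, hlh⟩ := nu_antitone_le μ hμmono hA hhm
  obtain ⟨hafh, hlfh⟩ := nu_antitone_le μ hμmono hA hfhm
  obtain ⟨hap, hlp⟩ := nu_antitone_le μ hμmono hA hfpm
  obtain ⟨haQ, hlQ⟩ := nu_antitone_le μ hμmono hA hQm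
  -- level set identification for the p-power
  have heqp : ∀ t : ℝ, 0 < t →
      μ (A ∩ {x | ENNReal.ofReal t ≤ (f x : ℝ≥0∞) ^ p})
        = μ (A ∩ {x | ENNReal.ofReal (t ^ (1/p)) ≤ (f x : ℝ≥0∞)}) := by
    intro t ht
    congr 1
    ext x
    simp only [mem_inter_iff, mem_setOf_eq]
    rw [pow_level _ hp0 ht]
  have heqQ : ∀ t : ℝ, 0 < t →
      μ (A ∩ {x | ENNReal.ofReal t ≤ (f x : ℝ≥0∞) ^ q * (h x : ℝ≥0∞) ^ q})
        = μ (A ∩ {x | ENNReal.ofReal (t ^ (1/q)) ≤ (f x : ℝ≥0∞) * (h x : ℝ≥0∞)}) := by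
    intro t ht
    congr 1
    ext x
    simp only [mem_inter_iff, mem_setOf_eq]
    rw [← ENNReal.mul_rpow_of_nonneg _ _ hq0.le, pow_level _ hq0 ht]
  -- comonotonicity: the key minimum inequality
  have hmin : ∀ s t : ℝ, 0 < s → 0 < t →
      min (μ (A ∩ {x | ENNReal.ofReal s ≤ (f x : ℝ≥0∞)}))
          (μ (A ∩ {x | ENNReal.ofReal t ≤ (h x : ℝ≥0∞)}))
        ≤ μ (A ∩ {x | ENNReal.ofReal (s * t) ≤ (f x : ℝ≥0∞) * (h x : ℝ≥0∞)}) := by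
    intro s t hs ht
    have hBm : MeasurableSet {x | ENNReal.ofReal s ≤ (f x : ℝ≥0∞)} :=
      hfm measurableSet_Ici
    have hCm : MeasurableSet {x | ENNReal.ofReal t ≤ (h x : ℝ≥0∞)} :=
      hhm measurableSet_Ici
    have hsub : ∀ x, ENNReal.ofReal s ≤ (f x : ℝ≥0∞) → ENNReal.ofReal t ≤ (h x : ℝ≥0∞) →
        ENNReal.ofReal (s * t) ≤ (f x : ℝ≥0∞) * (h x : ℝ≥0∞) := by
      intro x h1 h2
      rw [ENNReal.ofReal_mul hs.le]
      exact mul_le_mul' h1 h2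
    have hcomp : ({x | ENNReal.ofReal s ≤ (f x : ℝ≥0∞)}
          ⊆ {x | ENNReal.ofReal t ≤ (h x : ℝ≥0∞)})
        ∨ ({x | ENNReal.ofReal t ≤ (h x : ℝ≥0∞)}
          ⊆ {x | ENNReal.ofReal s ≤ (f x : ℝ≥0∞)}) := by
      by_contra hcon
      push_neg at hcon
      obtain ⟨h1, h2⟩ := hcon
      rw [not_subset] at h1 h2
      obtain ⟨x, hxB, hxC⟩ := h1
      obtain ⟨y, hyC, hyB⟩ := h2
      simp only [mem_setOf_eq, not_le] at hxB hxC hyC hyB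
      have hfxy : (f y : ℝ) < (f x : ℝ) := by
        have := lt_of_lt_of_le hyB hxB
        exact_mod_cast this
      have hhxy : (h x : ℝ) < (h y : ℝ) := by
        have := lt_of_lt_of_le hxC hyC
        exact_mod_cast this
      nlinarith [hfh x y]
    rcases hcomp with hbc | hcb
    · refine le_trans (min_le_left _ _) ?_
      refine hμmono _ _ (hA.inter hBm) (hA.inter (hfhm measurableSet_Ici)) ?_
      rintro x ⟨hxA, hxB⟩
      exact ⟨hxA, hsub x hxB (hbc hxB)⟩
    · refine le_trans (min_le_right _ _) ?_
      refine hμmono _ _ (hA.inter hCm) (hA.inter (hfhm measurableSet_Ici)) ?_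
      rintro x ⟨hxA, hxC⟩
      exact ⟨hxA, hsub x (hcb hxC) hxC⟩
  exact main_core
    (fun t => μ (A ∩ {x | ENNReal.ofReal t ≤ (f x : ℝ≥0∞)}))
    (fun t => μ (A ∩ {x | ENNReal.ofReal t ≤ (h x : ℝ≥0∞)}))
    (fun t => μ (A ∩ {x | ENNReal.ofReal t ≤ (f x : ℝ≥0∞) * (h x : ℝ≥0∞)}))
    (fun t => μ (A ∩ {x | ENNReal.ofReal t ≤ (f x : ℝ≥0∞) ^ p}))
    (fun t => μ (A ∩ {x | ENNReal.ofReal t ≤ (f x : ℝ≥0∞) ^ q * (h x : ℝ≥0∞) ^ q}))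
    hm0 hmtop haf hah hafh hap haQ hlf hlh hlfh hlp hlQ hp hq heqp heqQ hmin

end Main
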